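/- Let n ≥ 2 and K a field, and let S = J_n + Z be an affine subspace of M(n×n,K) with all elements nilpotent of rank n-1, where every element of Z is block upper triangular with diagonal blocks of sizes r×r and (n-r)×(n-r) for some fixed r ∈ {1,…,n-1}. Assume for every n' ∈ {1,…,n-1} that every affine subspace of nilpotent n'×n' matrices of rank n'-1 has dimension at most (n'-1)(n'-2)/2. Then dim Z ≤ (n-1)(n-2)/2. -/

import Mathlib

open Matrix Module Submodule

/-- The nilpotent Jordan block of size `m` (ones on the superdiagonal). -/
def aux13J (K : Type*) [Field K] (m : ℕ) : Matrix (Fin m) (Fin m) K :=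
  Matrix.of fun i j => if (i : ℕ) + 1 = (j : ℕ) then 1 else 0

lemma aux13_even (m : ℕ) : Even (m * (m - 1)) := by
  rcases Nat.even_or_odd m with h | h
  · exact h.mul_right _
  · obtain ⟨k, hk⟩ := h
    have h1 : m - 1 = 2 * k := by omega
    rw [h1]
    exact ⟨m * k, by ring⟩

lemma aux13_arith {r s : ℕ} (hr : 1 ≤ r) (hs : 1 ≤ s) :
    (r - 1) * (r - 2) / 2 + (s - 1) * (s - 2) / 2 + (r * s - 1)
      ≤ (r + s - 1) * (r + s - 2) / 2 := by
  have key : ∀ a b : ℕ, (a+b+1)*(a+b) = a*(a-1) + b*(b-1) + 2*(a*b+a+b) := by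
    intro a b
    rcases a with _ | a <;> rcases b with _ | b <;> simp [Nat.succ_sub_one] <;> ring
  have hid : (r + s - 1) * (r + s - 2)
      = (r - 1) * (r - 2) + (s - 1) * (s - 2) + 2 * (r * s - 1) := by
    obtain ⟨a, rfl⟩ : ∃ a, r = a + 1 := ⟨r - 1, by omega⟩
    obtain ⟨b, rfl⟩ : ∃ b, s = b + 1 := ⟨s - 1, by omega⟩
    have h1 : (a + 1) * (b + 1) - 1 = a * b + a + b := by
      have : (a + 1) * (b + 1) = a * b + a + b + 1 := by ring
      omega
    have g1 : a + 1 + (b + 1) - 1 = a + b + 1 := by omega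
    have g2 : a + 1 + (b + 1) - 2 = a + b := by omega
    have g3 : a + 1 - 1 = a := by omega
    have g4 : a + 1 - 2 = a - 1 := by omega
    have g5 : b + 1 - 1 = b := by omega
    have g6 : b + 1 - 2 = b - 1 := by omega
    rw [h1, g1, g2, g3, g4, g5, g6, key a b]
  have he1 : Even ((r - 1) * (r - 2)) := by
    have h := aux13_even (r - 1)
    have h2 : (r - 1) - 1 = r - 2 := by omega
    rwa [h2] at h
  have he2 : Even ((s - 1) * (s - 2)) := by
    have h := aux13_even (s - 1)
    have h2 : (s - 1) - 1 = s - 2 := by omega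
    rwa [h2] at h
  obtain ⟨k1, hk1⟩ := he1
  obtain ⟨k2, hk2⟩ := he2
  rw [hid, hk1, hk2]
  generalize r * s = c
  omega

section blocks

variable {K : Type*} [Field K] {m p : Type*} [Fintype m] [Fintype p]
  [DecidableEq m] [DecidableEq p]

lemma aux13_pow (B : Matrix m m K) (C : Matrix m p K) (D : Matrix p p K) (k : ℕ) :
    ∃ C', (Matrix.fromBlocks B C 0 D) ^ k = Matrix.fromBlocks (B ^ k) C' 0 (D ^ k) := by
  induction k with
  | zero => exact ⟨0, by simp [Matrix.fromBlocks_one]⟩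
  | succ k ih =>
    obtain ⟨C', h⟩ := ih
    refine ⟨B ^ k * C + C' * D, ?_⟩
    rw [pow_succ, h, Matrix.fromBlocks_multiply, pow_succ, pow_succ]
    simp

lemma aux13_nilp {B : Matrix m m K} {C : Matrix m p K} {D : Matrix p p K}
    (h : IsNilpotent (Matrix.fromBlocks B C 0 D)) : IsNilpotent B ∧ IsNilpotent D := by
  obtain ⟨k, hk⟩ := h
  obtain ⟨C', h'⟩ := aux13_pow B C D k
  rw [hk] at h'
  have h11 := congrArg Matrix.toBlocks₁₁ h'
  have h22 := congrArg Matrix.toBlocks₂₂ h'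
  rw [Matrix.toBlocks_fromBlocks₁₁] at h11
  rw [Matrix.toBlocks_fromBlocks₂₂] at h22
  exact ⟨⟨k, h11.symm.trans rfl⟩, ⟨k, h22.symm.trans rfl⟩⟩

lemma aux13_rank_nilp [Nonempty m] {B : Matrix m m K} (h : IsNilpotent B) :
    B.rank + 1 ≤ Fintype.card m := by
  have hker : LinearMap.ker B.mulVecLin ≠ ⊥ := by
    intro hbot
    have hinj : Function.Injective B.mulVec := by
      have := LinearMap.ker_eq_bot.mp hbot
      exact this
    have hunit := Matrix.mulVec_injective_iff_isUnit.mp hinj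
    obtain ⟨k, hk⟩ := h
    have hu : IsUnit ((0 : Matrix m m K)) := hk ▸ hunit.pow k
    exact not_isUnit_zero hu
  have h1 : 0 < finrank K (LinearMap.ker B.mulVecLin) := by
    rcases Nat.eq_zero_or_pos (finrank K (LinearMap.ker B.mulVecLin)) with h0 | h0
    · exact absurd (Submodule.finrank_eq_zero.mp h0) hker
    · exact h0
  have h2 := LinearMap.finrank_range_add_finrank_ker B.mulVecLin
  rw [Module.finrank_pi] at h2
  have h3 : B.rank = finrank K (LinearMap.range B.mulVecLin) := rfl
  omega

lemma aux13_rank_left (B : Matrix m m K) (C : Matrix m p K) (D : Matrix p p K) :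
    (Matrix.fromBlocks B C 0 D).rank ≤ B.rank + Fintype.card p := by
  classical
  set M := Matrix.fromBlocks B C 0 D with hM
  rw [Matrix.rank_eq_finrank_span_cols]
  let ι : (m → K) →ₗ[K] (m ⊕ p → K) :=
    { toFun := fun y => Sum.elim y 0
      map_add' := fun x y => by funext i; cases i <;> simp
      map_smul' := fun c x => by funext i; cases i <;> simp }
  have hle : span K (Set.range Mᵀ) ≤
      (span K (Set.range Bᵀ)).map ι ⊔ span K (Set.range fun j : p => Mᵀ (Sum.inr j)) := by
    rw [span_le]
    rintro _ ⟨j, rfl⟩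
    cases j with
    | inl j =>
      have : Mᵀ (Sum.inl j) = ι (Bᵀ j) := by
        funext i
        cases i <;> simp [M, ι, Matrix.fromBlocks]
      rw [this]
      exact Submodule.mem_sup_left (Submodule.mem_map_of_mem (subset_span ⟨j, rfl⟩))
    | inr j =>
      exact Submodule.mem_sup_right (subset_span ⟨j, rfl⟩)
  refine (Submodule.finrank_mono hle).trans ?_
  refine (finrank_add_le_finrank_add_finrank _ _).trans ?_
  gcongr
  · exact (Submodule.finrank_map_le ι _).trans_eq (Matrix.rank_eq_finrank_span_cols B).symm
  · exact finrank_range_le_card _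

lemma aux13_rank_right (B : Matrix m m K) (C : Matrix m p K) (D : Matrix p p K) :
    (Matrix.fromBlocks B C 0 D).rank ≤ Fintype.card m + D.rank := by
  have h1 : (Matrix.fromBlocks B C 0 D).rank = (Matrix.fromBlocks Dᵀ Cᵀ 0 Bᵀ).rank := by
    rw [← Matrix.rank_transpose (Matrix.fromBlocks B C 0 D), Matrix.fromBlocks_transpose]
    rw [← Matrix.rank_submatrix (Matrix.fromBlocks Dᵀ Cᵀ 0 Bᵀ) (Equiv.sumComm m p)
      (Equiv.sumComm m p)]
    congr 1
    have h := Matrix.fromBlocks_submatrix_sum_swap_sum_swap Dᵀ Cᵀ (0 : Matrix m p K) Bᵀ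
    rw [show ⇑(Equiv.sumComm m p) = (Sum.swap : m ⊕ p → p ⊕ m) from rfl, h]
    simp
  have h2 := aux13_rank_left Dᵀ Cᵀ Bᵀ
  rw [Matrix.rank_transpose] at h2
  omega

end blocks

set_option maxHeartbeats 1000000 in
lemma aux13_rank_special {K : Type*} [Field K] {r s : ℕ} (hr : 1 ≤ r) (hs : 1 ≤ s)
    (C : Matrix (Fin r) (Fin s) K)
    (hC : C ⟨r - 1, by omega⟩ ⟨0, by omega⟩ = 0) :
    (Matrix.fromBlocks (aux13J K r) C 0 (aux13J K s)).rank ≤ r + s - 2 := by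
  classical
  set N := Matrix.fromBlocks (aux13J K r) C 0 (aux13J K s) with hN
  have h0 : N.rank = finrank K (span K (Set.range N)) := by
    rw [← Matrix.rank_transpose, Matrix.rank_eq_finrank_span_cols]
    rfl
  set i₀ : Fin r := ⟨r - 1, by omega⟩ with hi₀
  set j₀ : Fin s := ⟨s - 1, by omega⟩ with hj₀
  set T : Finset (Fin r ⊕ Fin s) :=
    (Finset.univ.erase (Sum.inl i₀)).erase (Sum.inr j₀) with hT
  have hmem : (Sum.inr j₀ : Fin r ⊕ Fin s) ∈ Finset.univ.erase (Sum.inl i₀) :=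
    Finset.mem_erase.mpr ⟨by simp, Finset.mem_univ _⟩
  have hTcard : T.card = r + s - 2 := by
    rw [hT, Finset.card_erase_of_mem hmem, Finset.card_erase_of_mem (Finset.mem_univ _)]
    simp only [Finset.card_univ, Fintype.card_sum, Fintype.card_fin]
    omega
  have key : ∀ i, N i ∈ span K (Set.range fun t : T => N t.val) := by
    intro i
    by_cases hiT : i ∈ T
    · exact subset_span ⟨⟨i, hiT⟩, rfl⟩
    · by_cases h1 : i = Sum.inl i₀
      · subst h1
        have hrow : N (Sum.inl i₀) = ∑ j : Fin s,
            (if h : (j : ℕ) + 1 < s then C i₀ ⟨(j : ℕ) + 1, h⟩ else 0) • N (Sum.inr j) := by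
          funext x
          rw [Finset.sum_apply]
          cases x with
          | inl k =>
            have hz : ∀ j : Fin s,
                ((if h : (j : ℕ) + 1 < s then C i₀ ⟨(j : ℕ) + 1, h⟩ else 0) • N (Sum.inr j))
                  (Sum.inl k) = 0 := by
              intro j
              have : N (Sum.inr j) (Sum.inl k) = 0 := rfl
              simp [this]
            rw [Finset.sum_eq_zero fun j _ => hz j]
            show aux13J K r i₀ k = 0
            simp only [aux13J, Matrix.of_apply, hi₀]
            have : ¬ ((r - 1 : ℕ) + 1 = (k : ℕ)) := by omega
            simp [this]
          | inr k =>
            show C i₀ k = _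
            by_cases hk : (k : ℕ) = 0
            · have hk' : k = ⟨0, by omega⟩ := by ext; exact hk
              rw [Finset.sum_eq_zero, hk', hC]
              intro j _
              have hjk : N (Sum.inr j) (Sum.inr k) = 0 := by
                show aux13J K s j k = 0
                simp only [aux13J, Matrix.of_apply]
                have : ¬ ((j : ℕ) + 1 = (k : ℕ)) := by omega
                simp [this]
              simp [hjk]
            · set j' : Fin s := ⟨(k : ℕ) - 1, by omega⟩ with hj'
              rw [Finset.sum_eq_single j']
              · have hlt : ((j' : ℕ) + 1 < s) := by simp [hj']; omega
                rw [dif_pos hlt]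
                have hone : N (Sum.inr j') (Sum.inr k) = 1 := by
                  show aux13J K s j' k = 1
                  simp only [aux13J, Matrix.of_apply]
                  have : ((j' : ℕ) + 1 = (k : ℕ)) := by simp [hj']; omega
                  simp [this]
                have harg : (⟨(j' : ℕ) + 1, hlt⟩ : Fin s) = k := by ext; simp [hj']; omega
                rw [harg]
                simp [hone]
              · intro j _ hjne
                have hjk : N (Sum.inr j) (Sum.inr k) = 0 := by
                  show aux13J K s j k = 0
                  simp only [aux13J, Matrix.of_apply]
                  have : ¬ ((j : ℕ) + 1 = (k : ℕ)) := by
                    intro hcon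
                    apply hjne
                    have hv : (j : ℕ) = (k : ℕ) - 1 := by omega
                    rw [hj']
                    ext
                    simpa using hv
                  simp [this]
                simp [hjk]
              · intro hcon
                exact absurd (Finset.mem_univ j') hcon
        rw [hrow]
        refine Submodule.sum_mem _ fun j _ => ?_
        by_cases h : (j : ℕ) + 1 < s
        · rw [dif_pos h]
          refine Submodule.smul_mem _ _ (subset_span ⟨⟨Sum.inr j, ?_⟩, rfl⟩)
          rw [hT]
          refine Finset.mem_erase.mpr ⟨?_, Finset.mem_erase.mpr ⟨by simp, Finset.mem_univ _⟩⟩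
          intro hcon
          have hjj : j = j₀ := by injection hcon
          have : (j : ℕ) = s - 1 := by rw [hjj, hj₀]
          omega
        · rw [dif_neg h]
          simp
      · by_cases h2 : i = Sum.inr j₀
        · subst h2
          have hzero : N (Sum.inr j₀) = 0 := by
            funext x
            cases x with
            | inl k => rfl
            | inr k =>
              show aux13J K s j₀ k = 0
              simp only [aux13J, Matrix.of_apply, hj₀]
              have : ¬ ((s - 1 : ℕ) + 1 = (k : ℕ)) := by omega
              simp [this]
          rw [hzero]
          exact Submodule.zero_mem _
        · exact absurd (Finset.mem_erase.mpr ⟨h2, Finset.mem_erase.mpr ⟨h1, Finset.mem_univ i⟩⟩) hiT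
  rw [h0]
  have hle : span K (Set.range N) ≤ span K (Set.range fun t : T => N t.val) :=
    span_le.mpr (by rintro _ ⟨i, rfl⟩; exact key i)
  refine (Submodule.finrank_mono hle).trans ?_
  refine (finrank_range_le_card _).trans ?_
  rw [Fintype.card_coe, hTcard]

lemma aux13_finrank_prod {K V W : Type*} [Field K] [AddCommGroup V] [Module K V]
    [AddCommGroup W] [Module K W] [FiniteDimensional K V] [FiniteDimensional K W]
    (p : Submodule K V) (q : Submodule K W) :
    finrank K (p.prod q) = finrank K p + finrank K q := by
  have eqv : ↥(p.prod q) ≃ₗ[K] ↥p × ↥q :=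
    { toFun := fun x => (⟨x.val.1, x.property.1⟩, ⟨x.val.2, x.property.2⟩)
      invFun := fun y => ⟨(y.1.val, y.2.val), ⟨y.1.property, y.2.property⟩⟩
      left_inv := fun x => rfl
      right_inv := fun y => rfl
      map_add' := fun x y => rfl
      map_smul' := fun c x => rfl }
  rw [eqv.finrank_eq, Module.finrank_prod]
set_option maxHeartbeats 4000000 in
set_option synthInstance.maxHeartbeats 400000 in
/-- Lemma on block upper triangular directions: if every element of `J + Z` is nilpotent of
rank `n-1`, every element of `Z` is block upper triangular with diagonal blocks of sizes
`r` and `n-r`, and the dimension bound `(n'-1)(n'-2)/2` holds for all sizes `n' < n`, then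
`dim Z ≤ (n-1)(n-2)/2`. -/
theorem stmt13 (n : ℕ) (hn : 2 ≤ n) (K : Type*) [Field K]
    (r : ℕ) (hr1 : 1 ≤ r) (hrn : r ≤ n - 1)
    (J : Matrix (Fin n) (Fin n) K)
    (hJ : J = Matrix.of fun (i j : Fin n) => if (i : ℕ) + 1 = (j : ℕ) then 1 else 0)
    (Z : Submodule K (Matrix (Fin n) (Fin n) K))
    (hblock : ∀ A ∈ Z, ∀ i j : Fin n, r ≤ (i : ℕ) → (j : ℕ) < r → A i j = 0)
    (hS : ∀ A ∈ Z, IsNilpotent (J + A) ∧ (J + A).rank = n - 1)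
    (hind : ∀ n' : ℕ, 1 ≤ n' → n' ≤ n - 1 →
      ∀ (Z' : Submodule K (Matrix (Fin n') (Fin n') K)) (P : Matrix (Fin n') (Fin n') K),
        (∀ A ∈ Z', IsNilpotent (P + A) ∧ (P + A).rank = n' - 1) →
        Module.finrank K Z' ≤ (n' - 1) * (n' - 2) / 2) :
    Module.finrank K Z ≤ (n - 1) * (n - 2) / 2 := by
  classical
  set s := n - r with hsdef
  have hs1 : 1 ≤ s := by omega
  have hrs : r + s = n := by omega
  let e : Fin r ⊕ Fin s ≃ Fin n := finSumFinEquiv.trans (finCongr hrs)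
  have he1 : ∀ j : Fin r, ((e (Sum.inl j)) : ℕ) = (j : ℕ) := by
    intro j; simp [e, finCongr_apply]
  have he2 : ∀ j : Fin s, ((e (Sum.inr j)) : ℕ) = r + (j : ℕ) := by
    intro j; simp [e, finCongr_apply]
  let φ₁ : Matrix (Fin n) (Fin n) K →ₗ[K] Matrix (Fin r) (Fin r) K :=
    { toFun := fun A => A.submatrix (e ∘ Sum.inl) (e ∘ Sum.inl)
      map_add' := fun _ _ => rfl
      map_smul' := fun _ _ => rfl }
  let φ₂ : Matrix (Fin n) (Fin n) K →ₗ[K] Matrix (Fin s) (Fin s) K :=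
    { toFun := fun A => A.submatrix (e ∘ Sum.inr) (e ∘ Sum.inr)
      map_add' := fun _ _ => rfl
      map_smul' := fun _ _ => rfl }
  have hbl : ∀ A ∈ Z, ∀ (i : Fin s) (j : Fin r),
      (J + A) (e (Sum.inr i)) (e (Sum.inl j)) = 0 := by
    intro A hA i j
    have hv2 := he2 i
    have hv1 := he1 j
    have hjlt : (j : ℕ) < r := j.isLt
    have h1 : J (e (Sum.inr i)) (e (Sum.inl j)) = 0 := by
      rw [hJ]
      simp only [Matrix.of_apply]
      rw [if_neg]
      omega
    have h2 : A (e (Sum.inr i)) (e (Sum.inl j)) = 0 :=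
      hblock A hA _ _ (by omega) (by omega)
    rw [Matrix.add_apply, h1, h2, add_zero]
  have hdec : ∀ A ∈ Z, (J + A).submatrix e e
      = Matrix.fromBlocks (φ₁ (J + A)) ((J + A).submatrix (e ∘ Sum.inl) (e ∘ Sum.inr))
        0 (φ₂ (J + A)) := by
    intro A hA
    ext i j
    cases i with
    | inl i =>
      cases j with
      | inl j => rfl
      | inr j => rfl
    | inr i =>
      cases j with
      | inl j => exact hbl A hA i j
      | inr j => rfl
  have hnil : ∀ A ∈ Z, IsNilpotent ((J + A).submatrix e e) := by
    intro A hA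
    have h := (hS A hA).1
    have h2 := h.map (Matrix.reindexAlgEquiv K K e.symm)
    simpa [Matrix.reindexAlgEquiv_apply, Matrix.reindex_apply, Equiv.symm_symm] using h2
  have hrk : ∀ A ∈ Z, ((J + A).submatrix e e).rank = n - 1 := by
    intro A hA
    rw [Matrix.rank_submatrix]
    exact (hS A hA).2
  haveI : Nonempty (Fin r) := ⟨⟨0, by omega⟩⟩
  haveI : Nonempty (Fin s) := ⟨⟨0, by omega⟩⟩
  have hZ1 : ∀ B ∈ Z.map φ₁, IsNilpotent (φ₁ J + B) ∧ (φ₁ J + B).rank = r - 1 := by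
    rintro B ⟨A, hA, rfl⟩
    have hd := hdec A hA
    have hadd1 : φ₁ (J + A) = φ₁ J + φ₁ A := map_add _ _ _
    have hnl := hnil A hA
    rw [hd] at hnl
    have hblocks := aux13_nilp hnl
    have hr' := hrk A hA
    rw [hd] at hr'
    have hub := aux13_rank_nilp hblocks.1
    have hlb := aux13_rank_left (φ₁ (J + A)) ((J + A).submatrix (e ∘ Sum.inl) (e ∘ Sum.inr))
      (φ₂ (J + A))
    rw [hr'] at hlb
    rw [Fintype.card_fin] at hub hlb
    rw [← hadd1]
    exact ⟨hblocks.1, by omega⟩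
  have hZ2 : ∀ B ∈ Z.map φ₂, IsNilpotent (φ₂ J + B) ∧ (φ₂ J + B).rank = s - 1 := by
    rintro B ⟨A, hA, rfl⟩
    have hd := hdec A hA
    have hadd2 : φ₂ (J + A) = φ₂ J + φ₂ A := map_add _ _ _
    have hnl := hnil A hA
    rw [hd] at hnl
    have hblocks := aux13_nilp hnl
    have hr' := hrk A hA
    rw [hd] at hr'
    have hub := aux13_rank_nilp hblocks.2
    have hlb := aux13_rank_right (φ₁ (J + A)) ((J + A).submatrix (e ∘ Sum.inl) (e ∘ Sum.inr))
      (φ₂ (J + A))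
    rw [hr'] at hlb
    rw [Fintype.card_fin] at hub hlb
    rw [← hadd2]
    exact ⟨hblocks.2, by omega⟩
  have hind1 := hind r hr1 hrn (Z.map φ₁) (φ₁ J) hZ1
  have hind2 := hind s hs1 (by omega) (Z.map φ₂) (φ₂ J) hZ2
  let ψ : Z →ₗ[K] Matrix (Fin r) (Fin r) K × Matrix (Fin s) (Fin s) K :=
    (φ₁.prod φ₂).comp Z.subtype
  have hsplit := LinearMap.finrank_range_add_finrank_ker ψ
  have hrange : LinearMap.range ψ ≤ (Z.map φ₁).prod (Z.map φ₂) := by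
    rintro x ⟨⟨A, hA⟩, rfl⟩
    exact ⟨⟨A, hA, rfl⟩, ⟨A, hA, rfl⟩⟩
  have hrangele : finrank K (LinearMap.range ψ)
      ≤ finrank K (Z.map φ₁) + finrank K (Z.map φ₂) :=
    (Submodule.finrank_mono hrange).trans (aux13_finrank_prod _ _).le
  set i₀ : Fin r := ⟨r - 1, by omega⟩ with hi₀
  set js0 : Fin s := ⟨0, by omega⟩ with hjs0
  have hkey : ∀ A ∈ Z, φ₁ A = 0 → φ₂ A = 0 → A (e (Sum.inl i₀)) (e (Sum.inr js0)) = 0 := by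
    intro A hA h1 h2
    by_contra ha
    set a := A (e (Sum.inl i₀)) (e (Sum.inr js0)) with hadef
    set B := (-a⁻¹) • A with hBdef
    have hBZ : B ∈ Z := Z.smul_mem _ hA
    have hB1 : φ₁ B = 0 := by rw [hBdef, _root_.map_smul, h1, smul_zero]
    have hB2 : φ₂ B = 0 := by rw [hBdef, _root_.map_smul, h2, smul_zero]
    set Cm : Matrix (Fin r) (Fin s) K := (J + B).submatrix (e ∘ Sum.inl) (e ∘ Sum.inr) with hCm
    have hd' := hdec B hBZ
    have hblk1 : φ₁ (J + B) = aux13J K r := by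
      rw [map_add, hB1, add_zero]
      ext i j
      show J (e (Sum.inl i)) (e (Sum.inl j)) = _
      rw [hJ]
      simp only [Matrix.of_apply, aux13J]
      rw [he1 i, he1 j]
    have hblk2 : φ₂ (J + B) = aux13J K s := by
      rw [map_add, hB2, add_zero]
      ext i j
      show J (e (Sum.inr i)) (e (Sum.inr j)) = _
      rw [hJ]
      simp only [Matrix.of_apply, aux13J]
      rw [he2 i, he2 j]
      by_cases hc : (i : ℕ) + 1 = (j : ℕ)
      · rw [if_pos (by omega), if_pos hc]
      · rw [if_neg (by omega), if_neg hc]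
    have hc0 : Cm i₀ js0 = 0 := by
      show (J + B) (e (Sum.inl i₀)) (e (Sum.inr js0)) = 0
      rw [Matrix.add_apply]
      have hJ1 : J (e (Sum.inl i₀)) (e (Sum.inr js0)) = 1 := by
        rw [hJ]
        simp only [Matrix.of_apply]
        rw [if_pos]
        have := he1 i₀
        have := he2 js0
        have : (i₀ : ℕ) = r - 1 := rfl
        have : (js0 : ℕ) = 0 := rfl
        rw [he1, he2]
        show (i₀ : ℕ) + 1 = r + (js0 : ℕ)
        rw [show (i₀ : ℕ) = r - 1 from rfl, show (js0 : ℕ) = 0 from rfl]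
        omega
      have hB0 : B (e (Sum.inl i₀)) (e (Sum.inr js0)) = -1 := by
        rw [hBdef]
        simp only [Matrix.smul_apply, smul_eq_mul]
        rw [← hadef]
        field_simp
      rw [hJ1, hB0]
      ring
    have hsp := aux13_rank_special hr1 hs1 Cm hc0
    rw [← hblk1, ← hblk2, ← hd'] at hsp
    rw [Matrix.rank_submatrix] at hsp
    have hr2 := (hS B hBZ).2
    omega
  let E := {q : Fin r × Fin s // q ≠ (i₀, js0)}
  let θ : (LinearMap.ker ψ) →ₗ[K] (E → K) :=
    { toFun := fun x q =>
        ((x : Z) : Matrix (Fin n) (Fin n) K) (e (Sum.inl q.1.1)) (e (Sum.inr q.1.2))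
      map_add' := fun x y => rfl
      map_smul' := fun c x => rfl }
  have hθzero : ∀ x : LinearMap.ker ψ, θ x = 0 → x = 0 := by
    rintro ⟨⟨A, hA⟩, hxk⟩ hx
    have hψ : ψ ⟨A, hA⟩ = 0 := hxk
    have h1 : φ₁ A = 0 := congrArg Prod.fst hψ
    have h2 : φ₂ A = 0 := congrArg Prod.snd hψ
    have hA0 : A = 0 := by
      ext i j
      have hi : i = e (e.symm i) := (e.apply_symm_apply i).symm
      have hjj : j = e (e.symm j) := (e.apply_symm_apply j).symm
      rw [hi, hjj]
      cases hp : e.symm i with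
      | inl p =>
        cases hq : e.symm j with
        | inl q => exact congrFun (congrFun h1 p) q
        | inr q =>
          by_cases hc : (p, q) = (i₀, js0)
          · have hp' : p = i₀ := (Prod.mk.injEq _ _ _ _ ▸ hc).1
            have hq' : q = js0 := (Prod.mk.injEq _ _ _ _ ▸ hc).2
            rw [hp', hq']
            exact hkey A hA h1 h2
          · exact congrFun hx ⟨(p, q), hc⟩
      | inr p =>
        cases hq : e.symm j with
        | inl q =>
          exact hblock A hA _ _ (by rw [he2]; omega) (by rw [he1]; exact q.isLt)
        | inr q => exact congrFun (congrFun h2 p) q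
    apply Subtype.ext
    apply Subtype.ext
    exact hA0
  have hθinj : Function.Injective θ := by
    intro x y hxy
    have h2 : θ (x - y) = θ x - θ y := map_sub θ x y
    have h := hθzero (x - y) (by rw [h2, hxy, sub_self])
    exact sub_eq_zero.mp h
  have hkerle : finrank K (LinearMap.ker ψ) ≤ r * s - 1 := by
    have hf := LinearMap.finrank_le_finrank_of_injective hθinj
    rw [Module.finrank_pi] at hf
    have hcard : Fintype.card E = r * s - 1 := by
      have h := Fintype.card_subtype_compl (fun q : Fin r × Fin s => q = (i₀, js0))
      rw [Fintype.card_subtype_eq] at h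
      have hE : Fintype.card E = Fintype.card {q : Fin r × Fin s // ¬ q = (i₀, js0)} := rfl
      rw [hE, h, Fintype.card_prod, Fintype.card_fin, Fintype.card_fin]
    rw [hcard] at hf
    exact hf
  have har := aux13_arith hr1 hs1
  rw [hrs] at har
  have hle1 : finrank K Z ≤ finrank K (LinearMap.range ψ) + finrank K (LinearMap.ker ψ) := by
    rw [hsplit]
  linarith
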